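/- Let n ≥ 2, β ≥ 0, and let α satisfy −1 < α and α < β − 1/2. Then there is a constant C = C(n, α, β) such that for every δ with 0 < δ < 1/2, ∫_0^1 ∫_0^1 ∫_0^1 [ s_1^α t^{2n−3} / ( (δ + s_1 + s_2 + t²)^{2+β} (δ + s_1 + s_2 + t)^{2n−3} ) ] dt ds_2 ds_1 ≤ C δ^{α − β + 1/2}. -/

import Mathlib

open MeasureTheory Real

noncomputable section

private lemma ioo_int (f : ℝ → ℝ) (a b : ℝ) (hab : a ≤ b) :
    ∫ x in Set.Ioo a b, f x = ∫ x in a..b, f x := by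
  rw [intervalIntegral.integral_of_le hab, ← MeasureTheory.integral_Ioc_eq_integral_Ioo]

private lemma intA (A : ℝ) (hA : 0 < A) :
    ∫ t in Set.Ioo (0:ℝ) 1, (A + t ^ 2)⁻¹ ≤ π / 2 * A ^ (-(1/2) : ℝ) := by
  have hc : 0 < Real.sqrt A := Real.sqrt_pos.mpr hA
  have hc2 : Real.sqrt A ^ 2 = A := Real.sq_sqrt hA.le
  set c := Real.sqrt A with hcdef
  have hderiv : ∀ t ∈ Set.uIcc (0:ℝ) 1,
      HasDerivAt (fun t => c⁻¹ * Real.arctan (t * c⁻¹)) ((A + t ^ 2)⁻¹) t := by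
    intro t _
    have h1 : HasDerivAt (fun t : ℝ => t * c⁻¹) c⁻¹ t := hasDerivAt_mul_const _
    have h2 := (Real.hasDerivAt_arctan (t * c⁻¹)).comp t h1
    have h3 := h2.const_mul c⁻¹
    convert h3 using 1
    · rfl
    · rfl
    · rfl
    have hAt : (0:ℝ) < A + t ^ 2 := by positivity
    rw [← hc2]
    field_simp
  have hint : IntervalIntegrable (fun t : ℝ => (A + t ^ 2)⁻¹) volume 0 1 := by
    apply Continuous.intervalIntegrable
    exact (continuous_const.add (continuous_pow 2)).inv₀ fun t => by simp only [Pi.add_apply, id]; positivity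
  rw [ioo_int _ _ _ zero_le_one,
    intervalIntegral.integral_eq_sub_of_hasDerivAt hderiv hint]
  have hle : Real.arctan (1 * c⁻¹) ≤ π / 2 := (Real.arctan_lt_pi_div_two _).le
  have hrw : A ^ (-(1/2) : ℝ) = c⁻¹ := by
    rw [Real.rpow_neg hA.le, ← Real.sqrt_eq_rpow]
  rw [hrw]
  simp only [zero_mul, Real.arctan_zero, mul_zero, sub_zero]
  calc c⁻¹ * Real.arctan (1 * c⁻¹) ≤ c⁻¹ * (π/2) := by
        exact mul_le_mul_of_nonneg_left hle (by positivity)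
    _ = π / 2 * c⁻¹ := by ring

private lemma intB (B q : ℝ) (hB : 0 < B) (hq : 0 < q) :
    ∫ s in Set.Ioo (0:ℝ) 1, (B + s) ^ (-(1+q)) ≤ B ^ (-q) / q := by
  have hpos : ∀ s : ℝ, 0 ≤ s → 0 < B + s := fun s hs => by linarith
  have hderiv : ∀ s ∈ Set.uIcc (0:ℝ) 1,
      HasDerivAt (fun s : ℝ => -(q⁻¹ * (B + s) ^ (-q))) ((B + s) ^ (-(1+q))) s := by
    intro s hs
    rw [Set.uIcc_of_le zero_le_one] at hs
    have h1 : HasDerivAt (fun s : ℝ => B + s) 1 s := (hasDerivAt_id s).const_add B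
    have h2 := h1.rpow_const (p := -q) (Or.inl (hpos s hs.1).ne')
    have h3 := (h2.const_mul q⁻¹).neg
    convert h3 using 1
    · rfl
    · rfl
    · rfl
    rw [show -q - 1 = -(1+q) by ring]
    field_simp
  have hint : IntervalIntegrable (fun s : ℝ => (B + s) ^ (-(1+q))) volume 0 1 := by
    apply ContinuousOn.intervalIntegrable
    apply ContinuousOn.rpow_const
    · exact (continuous_const.add continuous_id).continuousOn
    · intro s hs
      rw [Set.uIcc_of_le zero_le_one] at hs
      exact Or.inl (hpos s hs.1).ne'
  rw [ioo_int _ _ _ zero_le_one,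
    intervalIntegral.integral_eq_sub_of_hasDerivAt hderiv hint]
  have h1 : (0:ℝ) ≤ (B + 1) ^ (-q) := Real.rpow_nonneg (by linarith) _
  have h2 : (0:ℝ) < q⁻¹ := by positivity
  rw [add_zero, div_eq_inv_mul]
  nlinarith

private lemma intCint (α q δ : ℝ) (hα : -1 < α) (hq : 0 < q) (hδ0 : 0 < δ) :
    IntervalIntegrable (fun s : ℝ => s ^ α * (δ + s) ^ (-q)) volume 0 1 := by
  have hmeas : Measurable fun s : ℝ => s ^ α * (δ + s) ^ (-q) :=
    (measurable_id.pow_const α).mul ((measurable_const.add measurable_id).pow_const (-q))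
  have hbound : IntervalIntegrable (fun s : ℝ => δ ^ (-q) * s ^ α) volume 0 1 :=
    (intervalIntegral.intervalIntegrable_rpow' hα).const_mul _
  rw [intervalIntegrable_iff] at hbound ⊢
  apply hbound.mono' hmeas.aestronglyMeasurable.restrict
  filter_upwards [ae_restrict_mem measurableSet_Ioc] with s hs
  rw [Set.uIoc_of_le zero_le_one] at hs
  have hs0 : 0 < s := hs.1
  have h1 : (δ + s) ^ (-q) ≤ δ ^ (-q) :=
    Real.rpow_le_rpow_of_nonpos hδ0 (by linarith) (by linarith)
  rw [Real.norm_eq_abs, abs_of_nonneg (by positivity)]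
  calc s ^ α * (δ + s) ^ (-q) ≤ s ^ α * δ ^ (-q) :=
        mul_le_mul_of_nonneg_left h1 (Real.rpow_nonneg hs0.le _)
    _ = δ ^ (-q) * s ^ α := mul_comm _ _

private lemma intC(α q δ : ℝ) (hα : -1 < α) (hq1 : α + 1 < q)
    (hδ0 : 0 < δ) (hδ1 : δ < 1) :
    ∫ s in Set.Ioo (0:ℝ) 1, s ^ α * (δ + s) ^ (-q) ≤
      (1 / (α + 1) + 1 / (q - α - 1)) * δ ^ (α + 1 - q) := by
  have hq0 : 0 < q := by linarith
  have hα1 : (0:ℝ) < α + 1 := by linarith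
  -- integrability of the whole function on [0,1]
  have hmeas : Measurable fun s : ℝ => s ^ α * (δ + s) ^ (-q) :=
    (measurable_id.pow_const α).mul ((measurable_const.add measurable_id).pow_const (-q))
  have hrpow_int : IntervalIntegrable (fun s : ℝ => s ^ α) volume 0 1 :=
    intervalIntegral.intervalIntegrable_rpow' hα
  have hbound : IntervalIntegrable (fun s : ℝ => δ ^ (-q) * s ^ α) volume 0 1 :=
    hrpow_int.const_mul _
  have hInt : IntervalIntegrable (fun s : ℝ => s ^ α * (δ + s) ^ (-q)) volume 0 1 := by
    rw [intervalIntegrable_iff] at hbound ⊢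
    apply hbound.mono' hmeas.aestronglyMeasurable.restrict
    filter_upwards [ae_restrict_mem measurableSet_Ioc] with s hs
    rw [Set.uIoc_of_le zero_le_one] at hs
    have hs0 : 0 < s := hs.1
    have h1 : (δ + s) ^ (-q) ≤ δ ^ (-q) :=
      Real.rpow_le_rpow_of_nonpos hδ0 (by linarith) (by linarith)
    rw [Real.norm_eq_abs, abs_of_nonneg (by positivity)]
    calc s ^ α * (δ + s) ^ (-q) ≤ s ^ α * δ ^ (-q) :=
          mul_le_mul_of_nonneg_left h1 (Real.rpow_nonneg hs0.le _)
      _ = δ ^ (-q) * s ^ α := mul_comm _ _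
  have hδ01 : (0:ℝ) ≤ δ := hδ0.le
  have hsub1 : Set.uIcc 0 δ ⊆ Set.uIcc (0:ℝ) 1 :=
    Set.uIcc_subset_uIcc (by simp) (by rw [Set.uIcc_of_le zero_le_one]; exact ⟨hδ01, hδ1.le⟩)
  have hsub2 : Set.uIcc δ 1 ⊆ Set.uIcc (0:ℝ) 1 :=
    Set.uIcc_subset_uIcc (by rw [Set.uIcc_of_le zero_le_one]; exact ⟨hδ01, hδ1.le⟩) (by simp)
  have hI1 := hInt.mono_set hsub1
  have hI2 := hInt.mono_set hsub2
  rw [show ∫ s in Set.Ioo (0:ℝ) 1, s ^ α * (δ + s) ^ (-q) =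
      ∫ s in (0:ℝ)..1, s ^ α * (δ + s) ^ (-q) by
    rw [intervalIntegral.integral_of_le zero_le_one, ← MeasureTheory.integral_Ioc_eq_integral_Ioo],
    ← intervalIntegral.integral_add_adjacent_intervals hI1 hI2]
  -- part 1
  have hP1 : ∫ s in (0:ℝ)..δ, s ^ α * (δ + s) ^ (-q) ≤ δ ^ (α + 1 - q) / (α + 1) := by
    have hb : IntervalIntegrable (fun s : ℝ => δ ^ (-q) * s ^ α) volume 0 δ :=
      (intervalIntegral.intervalIntegrable_rpow' hα).const_mul _
    have h1 : ∫ s in (0:ℝ)..δ, s ^ α * (δ + s) ^ (-q) ≤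
        ∫ s in (0:ℝ)..δ, δ ^ (-q) * s ^ α := by
      apply intervalIntegral.integral_mono_on hδ01 hI1 hb
      intro s hs
      have hs0 : 0 ≤ s := hs.1
      have h2 : (δ + s) ^ (-q) ≤ δ ^ (-q) :=
        Real.rpow_le_rpow_of_nonpos hδ0 (by linarith) (by linarith)
      calc s ^ α * (δ + s) ^ (-q) ≤ s ^ α * δ ^ (-q) :=
            mul_le_mul_of_nonneg_left h2 (Real.rpow_nonneg hs0 _)
        _ = δ ^ (-q) * s ^ α := mul_comm _ _
    refine h1.trans ?_
    rw [intervalIntegral.integral_const_mul, integral_rpow (Or.inl hα),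
      Real.zero_rpow (by positivity : α + 1 ≠ 0), sub_zero]
    rw [show α + 1 - q = -q + (α+1) by ring, Real.rpow_add hδ0]
    exact le_of_eq (by rw [Real.rpow_add hδ0 (-q) (α+1), Real.rpow_add hδ0 α 1, Real.rpow_one]; ring)
  -- part 2
  have hP2 : ∫ s in δ..1, s ^ α * (δ + s) ^ (-q) ≤ δ ^ (α + 1 - q) / (q - α - 1) := by
    have hb : IntervalIntegrable (fun s : ℝ => s ^ (α - q)) volume δ 1 := by
      apply ContinuousOn.intervalIntegrable
      apply ContinuousOn.rpow_const continuousOn_id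
      intro s hs
      rw [Set.uIcc_of_le hδ1.le] at hs
      exact Or.inl (ne_of_gt (lt_of_lt_of_le hδ0 hs.1))
    have h1 : ∫ s in δ..1, s ^ α * (δ + s) ^ (-q) ≤ ∫ s in δ..1, s ^ (α - q) := by
      apply intervalIntegral.integral_mono_on hδ1.le hI2 hb
      intro s hs
      have hs0 : 0 < s := lt_of_lt_of_le hδ0 hs.1
      have h2 : (δ + s) ^ (-q) ≤ s ^ (-q) :=
        Real.rpow_le_rpow_of_nonpos hs0 (by linarith) (by linarith)
      calc s ^ α * (δ + s) ^ (-q) ≤ s ^ α * s ^ (-q) :=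
            mul_le_mul_of_nonneg_left h2 (Real.rpow_nonneg hs0.le _)
        _ = s ^ (α - q) := by rw [← Real.rpow_add hs0]; ring_nf
    refine h1.trans ?_
    have hne : α - q ≠ -1 := by intro h; linarith [h]
    have h0ni : (0:ℝ) ∉ Set.uIcc δ 1 := by
      rw [Set.uIcc_of_le hδ1.le]; intro h; exact absurd h.1 (not_le.mpr hδ0)
    have he : α - q + 1 = α + 1 - q := by ring
    rw [integral_rpow (Or.inr ⟨hne, h0ni⟩), Real.one_rpow, he]
    have hd : (0:ℝ) < q - α - 1 := by linarith
    have key : (1 - δ ^ (α+1-q)) / (α+1-q) = (δ ^ (α+1-q) - 1) / (q-α-1) := by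
      rw [div_eq_div_iff (by intro h; exact absurd (by linarith : q = α + 1) (by intro h2; linarith [h2 ▸ hq1])) hd.ne']
      ring
    rw [key]
    gcongr
    linarith
  calc _ ≤ δ ^ (α + 1 - q) / (α + 1) + δ ^ (α + 1 - q) / (q - α - 1) := add_le_add hP1 hP2
    _ = (1 / (α + 1) + 1 / (q - α - 1)) * δ ^ (α + 1 - q) := by ring

/-- **The key scalar integral estimate in Lemma 4.9.** Let `n ≥ 2`, `β ≥ 0`,
`-1 < α < β - 1/2`. Then there is `C = C(n, α, β)` such that for all `0 < δ < 1/2`,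
`∫₀¹∫₀¹∫₀¹ s₁^α t^{2n-3} / ((δ+s₁+s₂+t²)^{2+β} (δ+s₁+s₂+t)^{2n-3}) dt ds₂ ds₁
  ≤ C δ^{α-β+1/2}`. -/
theorem weighted_kernel_integral_estimate
    (n : ℕ) (hn : 2 ≤ n) (α β : ℝ) (hβ : 0 ≤ β) (hα₁ : -1 < α) (hα₂ : α < β - 1 / 2) :
    ∃ C : ℝ, ∀ δ : ℝ, 0 < δ → δ < 1 / 2 →
      (∫ s₁ in Set.Ioo (0 : ℝ) 1, ∫ s₂ in Set.Ioo (0 : ℝ) 1, ∫ t in Set.Ioo (0 : ℝ) 1,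
          s₁ ^ α * t ^ (2 * n - 3) /
            ((δ + s₁ + s₂ + t ^ 2) ^ ((2 : ℝ) + β) * (δ + s₁ + s₂ + t) ^ (2 * n - 3))) ≤
        C * δ ^ (α - β + 1 / 2) := by
  set q : ℝ := 1/2 + β with hqdef
  have hq0 : (0:ℝ) < q := by rw [hqdef]; linarith
  have hq1 : α + 1 < q := by rw [hqdef]; linarith
  refine ⟨π/2/q * (1/(α+1) + 1/(q - α - 1)), ?_⟩
  intro δ hδ0 hδ12
  have hδ1 : δ < 1 := by linarith
  -- t-level estimate
  have keyT : ∀ s₁ ∈ Set.Ioo (0:ℝ) 1, ∀ s₂ ∈ Set.Ioo (0:ℝ) 1,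
      (∫ t in Set.Ioo (0:ℝ) 1, s₁ ^ α * t ^ (2 * n - 3) /
          ((δ + s₁ + s₂ + t ^ 2) ^ ((2 : ℝ) + β) * (δ + s₁ + s₂ + t) ^ (2 * n - 3)))
        ≤ π/2 * (s₁ ^ α * (δ + s₁ + s₂) ^ (-(1+q))) := by
    intro s₁ hs₁ s₂ hs₂
    have h01 : 0 < s₁ := hs₁.1
    have h02 : 0 < s₂ := hs₂.1
    have hA : 0 < δ + s₁ + s₂ := by linarith
    have step1 : (∫ t in Set.Ioo (0:ℝ) 1, s₁ ^ α * t ^ (2 * n - 3) /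
          ((δ + s₁ + s₂ + t ^ 2) ^ ((2 : ℝ) + β) * (δ + s₁ + s₂ + t) ^ (2 * n - 3)))
        ≤ ∫ t in Set.Ioo (0:ℝ) 1,
            s₁ ^ α * (δ + s₁ + s₂) ^ (-((1:ℝ)+β)) * ((δ + s₁ + s₂) + t ^ 2)⁻¹ := by
      apply integral_mono_of_nonneg
      · filter_upwards [ae_restrict_mem measurableSet_Ioo] with t ht
        have ht0 : 0 < t := ht.1
        positivity
      · have hc : Continuous fun t : ℝ =>
            s₁ ^ α * (δ + s₁ + s₂) ^ (-((1:ℝ)+β)) * ((δ + s₁ + s₂) + t ^ 2)⁻¹ :=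
          continuous_const.mul
            ((continuous_const.add (continuous_pow 2)).inv₀ fun t => by simp only [Pi.add_apply, id]; positivity)
        exact hc.integrableOn_Icc.mono_set Set.Ioo_subset_Icc_self
      · filter_upwards [ae_restrict_mem measurableSet_Ioo] with t ht
        have ht0 : 0 < t := ht.1
        have hX : (0:ℝ) < δ + s₁ + s₂ + t ^ 2 := by positivity
        have hY : (0:ℝ) < δ + s₁ + s₂ + t := by positivity
        have h1 : t ^ (2 * n - 3) ≤ (δ + s₁ + s₂ + t) ^ (2 * n - 3) :=
          pow_le_pow_left₀ ht0.le (by linarith) _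
        have hE : (δ + s₁ + s₂ + t ^ 2) ^ ((2:ℝ) + β)
            = (δ + s₁ + s₂ + t ^ 2) ^ ((1:ℝ) + β) * (δ + s₁ + s₂ + t ^ 2) ^ (1:ℝ) := by
          rw [← Real.rpow_add hX]; congr 1; ring
        have h2 : (δ + s₁ + s₂) ^ ((1:ℝ)+β) * (δ + s₁ + s₂ + t ^ 2)
            ≤ (δ + s₁ + s₂ + t ^ 2) ^ ((2:ℝ)+β) := by
          rw [hE, Real.rpow_one]
          exact mul_le_mul_of_nonneg_right
            (Real.rpow_le_rpow hA.le (by nlinarith) (by linarith)) hX.le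
        have hnum : s₁ ^ α * t ^ (2 * n - 3) ≤ s₁ ^ α * (δ + s₁ + s₂ + t) ^ (2 * n - 3) :=
          mul_le_mul_of_nonneg_left h1 (Real.rpow_nonneg h01.le _)
        have hden : ((δ + s₁ + s₂) ^ ((1:ℝ)+β) * (δ + s₁ + s₂ + t ^ 2)) *
              (δ + s₁ + s₂ + t) ^ (2 * n - 3)
            ≤ (δ + s₁ + s₂ + t ^ 2) ^ ((2:ℝ)+β) * (δ + s₁ + s₂ + t) ^ (2 * n - 3) :=
          mul_le_mul_of_nonneg_right h2 (by positivity)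
        have hdpos : (0:ℝ) < ((δ + s₁ + s₂) ^ ((1:ℝ)+β) * (δ + s₁ + s₂ + t ^ 2)) *
            (δ + s₁ + s₂ + t) ^ (2 * n - 3) := by positivity
        calc s₁ ^ α * t ^ (2 * n - 3) /
              ((δ + s₁ + s₂ + t ^ 2) ^ ((2 : ℝ) + β) * (δ + s₁ + s₂ + t) ^ (2 * n - 3))
            ≤ (s₁ ^ α * (δ + s₁ + s₂ + t) ^ (2 * n - 3)) /
              (((δ + s₁ + s₂) ^ ((1:ℝ)+β) * (δ + s₁ + s₂ + t ^ 2)) *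
                (δ + s₁ + s₂ + t) ^ (2 * n - 3)) :=
            div_le_div₀ (by positivity) hnum hdpos hden
          _ = s₁ ^ α * (δ + s₁ + s₂) ^ (-((1:ℝ)+β)) * ((δ + s₁ + s₂) + t ^ 2)⁻¹ := by
            rw [Real.rpow_neg hA.le]
            have e1 : ((δ + s₁ + s₂) ^ ((1:ℝ)+β)) ≠ 0 := by positivity
            have e2 : (δ + s₁ + s₂ + t ^ 2) ≠ 0 := hX.ne'
            have e3 : ((δ + s₁ + s₂ + t) ^ (2 * n - 3)) ≠ 0 := by positivity
            field_simp
    refine step1.trans ?_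
    rw [MeasureTheory.integral_const_mul]
    have step2 := mul_le_mul_of_nonneg_left (intA (δ + s₁ + s₂) hA)
      (show (0:ℝ) ≤ s₁ ^ α * (δ + s₁ + s₂) ^ (-((1:ℝ)+β)) by positivity)
    refine step2.trans (le_of_eq ?_)
    have e4 : (δ + s₁ + s₂) ^ (-((1:ℝ)+β)) * (δ + s₁ + s₂) ^ (-(1/2):ℝ)
        = (δ + s₁ + s₂) ^ (-(1+q)) := by
      rw [← Real.rpow_add hA]; congr 1; rw [hqdef]; ring
    calc s₁ ^ α * (δ + s₁ + s₂) ^ (-((1:ℝ)+β)) * (π/2 * (δ + s₁ + s₂) ^ (-(1/2):ℝ))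
        = π/2 * (s₁ ^ α * ((δ + s₁ + s₂) ^ (-((1:ℝ)+β)) * (δ + s₁ + s₂) ^ (-(1/2):ℝ))) := by
          ring
      _ = π/2 * (s₁ ^ α * (δ + s₁ + s₂) ^ (-(1+q))) := by rw [e4]
  -- s₂-level estimate
  have keyS : ∀ s₁ ∈ Set.Ioo (0:ℝ) 1,
      (∫ s₂ in Set.Ioo (0:ℝ) 1, ∫ t in Set.Ioo (0:ℝ) 1, s₁ ^ α * t ^ (2 * n - 3) /
          ((δ + s₁ + s₂ + t ^ 2) ^ ((2 : ℝ) + β) * (δ + s₁ + s₂ + t) ^ (2 * n - 3)))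
        ≤ π/2/q * (s₁ ^ α * (δ + s₁) ^ (-q)) := by
    intro s₁ hs₁
    have h01 : 0 < s₁ := hs₁.1
    have hB : 0 < δ + s₁ := by linarith
    have step1 : (∫ s₂ in Set.Ioo (0:ℝ) 1, ∫ t in Set.Ioo (0:ℝ) 1, s₁ ^ α * t ^ (2 * n - 3) /
          ((δ + s₁ + s₂ + t ^ 2) ^ ((2 : ℝ) + β) * (δ + s₁ + s₂ + t) ^ (2 * n - 3)))
        ≤ ∫ s₂ in Set.Ioo (0:ℝ) 1, (π/2 * s₁ ^ α) * ((δ + s₁) + s₂) ^ (-(1+q)) := by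
      apply integral_mono_of_nonneg
      · filter_upwards [ae_restrict_mem measurableSet_Ioo] with s₂ hs₂
        apply setIntegral_nonneg measurableSet_Ioo
        intro t ht
        have ht0 : 0 < t := ht.1
        have h02 : 0 < s₂ := hs₂.1
        positivity
      · have hc : ContinuousOn (fun s₂ : ℝ =>
            (π/2 * s₁ ^ α) * ((δ + s₁) + s₂) ^ (-(1+q))) (Set.Icc 0 1) := by
          apply ContinuousOn.mul continuousOn_const
          apply ContinuousOn.rpow_const ((continuous_const.add continuous_id).continuousOn)
          intro s₂ hs₂
          exact Or.inl (by have := hs₂.1; simp only [Pi.add_apply, id]; positivity)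
        exact hc.integrableOn_Icc.mono_set Set.Ioo_subset_Icc_self
      · filter_upwards [ae_restrict_mem measurableSet_Ioo] with s₂ hs₂
        have h := keyT s₁ hs₁ s₂ hs₂
        calc _ ≤ π/2 * (s₁ ^ α * (δ + s₁ + s₂) ^ (-(1+q))) := h
          _ = (π/2 * s₁ ^ α) * ((δ + s₁) + s₂) ^ (-(1+q)) := by ring
    refine step1.trans ?_
    rw [MeasureTheory.integral_const_mul]
    have step2 := mul_le_mul_of_nonneg_left (intB (δ + s₁) q hB hq0)
      (show (0:ℝ) ≤ π/2 * s₁ ^ α by positivity)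
    refine step2.trans (le_of_eq ?_)
    ring
  -- s₁-level
  have step1 : (∫ s₁ in Set.Ioo (0 : ℝ) 1, ∫ s₂ in Set.Ioo (0 : ℝ) 1,
        ∫ t in Set.Ioo (0 : ℝ) 1, s₁ ^ α * t ^ (2 * n - 3) /
          ((δ + s₁ + s₂ + t ^ 2) ^ ((2 : ℝ) + β) * (δ + s₁ + s₂ + t) ^ (2 * n - 3)))
      ≤ ∫ s₁ in Set.Ioo (0:ℝ) 1, π/2/q * (s₁ ^ α * (δ + s₁) ^ (-q)) := by
    apply integral_mono_of_nonneg
    · filter_upwards [ae_restrict_mem measurableSet_Ioo] with s₁ hs₁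
      apply setIntegral_nonneg measurableSet_Ioo
      intro s₂ hs₂
      apply setIntegral_nonneg measurableSet_Ioo
      intro t ht
      have h01 : 0 < s₁ := hs₁.1
      have h02 : 0 < s₂ := hs₂.1
      have ht0 : 0 < t := ht.1
      positivity
    · have h := intCint α q δ hα₁ hq0 hδ0
      rw [intervalIntegrable_iff, Set.uIoc_of_le zero_le_one] at h
      exact ((h.mono_set Set.Ioo_subset_Ioc_self).const_mul _)
    · filter_upwards [ae_restrict_mem measurableSet_Ioo] with s₁ hs₁
      exact keyS s₁ hs₁
  refine step1.trans ?_
  rw [MeasureTheory.integral_const_mul]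
  have step2 := mul_le_mul_of_nonneg_left (intC α q δ hα₁ hq1 hδ0 hδ1)
    (show (0:ℝ) ≤ π/2/q by positivity)
  refine step2.trans (le_of_eq ?_)
  rw [show α + 1 - q = α - β + 1/2 by rw [hqdef]; ring]
  ring

end
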